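/- Let A be positive definite and X Hermitian, and suppose Z is the Hermitian solution of the Sylvester equation AZ + ZA = A^{1/2}XA^{1/2}. Then for t near 0, (A² + tA^{1/2}XA^{1/2})^{1/2} = A + tZ + O(t²); consequently the Bures-Wasserstein logarithm satisfies log_A(A + tX) = tX + O(t²), i.e., the derivative at t=0 of t ↦ log_A(A+tX) equals X. -/

import Mathlib

open Matrix Filter Asymptotics
open scoped ComplexOrder

set_option maxHeartbeats 2000000
set_option synthInstance.maxHeartbeats 400000
set_option maxRecDepth 8000

/-- The PSD square root of a matrix (0 if not PSD). -/
noncomputable def msqrt {n : ℕ} (M : Matrix (Fin n) (Fin n) ℂ) : Matrix (Fin n) (Fin n) ℂ :=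
  letI := Classical.propDecidable M.PosSemidef
  if h : M.PosSemidef then
    h.isHermitian.eigenvectorUnitary.1 * diagonal ((↑) ∘ (√·) ∘ h.isHermitian.eigenvalues) *
      (star h.isHermitian.eigenvectorUnitary : Matrix (Fin n) (Fin n) ℂ)
  else 0

/-- `(AB)^{1/2} := A^{1/2} (A^{1/2} B A^{1/2})^{1/2} A^{-1/2}`. -/
noncomputable def sqAB {n : ℕ} (A B : Matrix (Fin n) (Fin n) ℂ) : Matrix (Fin n) (Fin n) ℂ :=
  msqrt A * msqrt (msqrt A * B * msqrt A) * (msqrt A)⁻¹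

/-- Bures-Wasserstein geodesic `A ◇_t B`. -/
noncomputable def geo {n : ℕ} (A B : Matrix (Fin n) (Fin n) ℂ) (t : ℝ) : Matrix (Fin n) (Fin n) ℂ :=
  ((1 - t)^2 : ℝ) • A + (t^2 : ℝ) • B + (t * (1 - t) : ℝ) • (sqAB A B + (sqAB A B)ᴴ)

/-- Bures-Wasserstein distance. -/
noncomputable def dBW {n : ℕ} (A B : Matrix (Fin n) (Fin n) ℂ) : ℝ :=
  Real.sqrt ((Matrix.trace A).re + (Matrix.trace B).re -
    2 * (Matrix.trace (msqrt (msqrt A * B * msqrt A))).re)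

attribute [local instance] Matrix.normedAddCommGroup Matrix.normedSpace

noncomputable def Matrix.PosSemidef.sqrt {n : ℕ} {M : Matrix (Fin n) (Fin n) ℂ}
    (h : M.PosSemidef) : Matrix (Fin n) (Fin n) ℂ :=
  h.isHermitian.eigenvectorUnitary.1 * diagonal ((↑) ∘ (√·) ∘ h.isHermitian.eigenvalues) *
    (star h.isHermitian.eigenvectorUnitary : Matrix (Fin n) (Fin n) ℂ)

open scoped MatrixOrder in
lemma Matrix.PosSemidef.sqrt_eq_cfc {n : ℕ} {M : Matrix (Fin n) (Fin n) ℂ}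
    (h : M.PosSemidef) : h.sqrt = CFC.sqrt M := by
  rw [CFC.sqrt_eq_real_sqrt M h.nonneg, cfcₙ_eq_cfc, h.1.cfc_eq, IsHermitian.cfc, Unitary.conjStarAlgAut_apply]
  rfl

open scoped MatrixOrder in
lemma Matrix.PosSemidef.posSemidef_sqrt {n : ℕ} {M : Matrix (Fin n) (Fin n) ℂ}
    (h : M.PosSemidef) : h.sqrt.PosSemidef := by
  rw [h.sqrt_eq_cfc]; exact (CFC.sqrt_nonneg M).posSemidef

open scoped MatrixOrder in
lemma Matrix.PosSemidef.sqrt_mul_self {n : ℕ} {M : Matrix (Fin n) (Fin n) ℂ}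
    (h : M.PosSemidef) : h.sqrt * h.sqrt = M := by
  rw [h.sqrt_eq_cfc]; exact CFC.sqrt_mul_sqrt_self M h.nonneg

open scoped MatrixOrder in
lemma Matrix.PosSemidef.sqrt_sq {n : ℕ} {M : Matrix (Fin n) (Fin n) ℂ}
    (h : M.PosSemidef) (h2 : (M ^ 2).PosSemidef) : h2.sqrt = M := by
  rw [h2.sqrt_eq_cfc]; exact CFC.sqrt_sq M h.nonneg

namespace BWaux
variable {n : ℕ}

/-- view a vector as an element of Euclidean space -/
noncomputable def euc (v : Fin n → ℂ) : EuclideanSpace ℂ (Fin n) := (WithLp.equiv 2 _).symm v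

lemma euc_inner (v w : Fin n → ℂ) : inner ℂ (euc v) (euc w) = star v ⬝ᵥ w := by
  rw [dotProduct_comm]; rfl

lemma euc_self (v : Fin n → ℂ) : star v ⬝ᵥ v = ((‖euc v‖ : ℂ)^2) := by
  rw [← euc_inner, inner_self_eq_norm_sq_to_K]; norm_cast

lemma exists_opBound (M : Matrix (Fin n) (Fin n) ℂ) :
    ∃ C : ℝ, 0 ≤ C ∧ ∀ v : Fin n → ℂ, ‖euc (M *ᵥ v)‖ ≤ C * ‖euc v‖ := by
  let L := LinearMap.toContinuousLinearMap (Matrix.toEuclideanLin M)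
  refine ⟨‖L‖, norm_nonneg _, fun v => ?_⟩
  have h : L (euc v) = euc (M *ᵥ v) := rfl
  simpa [h] using L.le_opNorm (euc v)

/-- quadratic form -/
noncomputable def q (M : Matrix (Fin n) (Fin n) ℂ) (v : Fin n → ℂ) : ℂ := star v ⬝ᵥ (M *ᵥ v)

lemma vecMul_herm {H : Matrix (Fin n) (Fin n) ℂ} (hH : H.IsHermitian) (v : Fin n → ℂ) :
    star v ᵥ* H = star (H *ᵥ v) := by
  rw [star_mulVec, hH.eq]

lemma q_conj {H : Matrix (Fin n) (Fin n) ℂ} (hH : H.IsHermitian) (v : Fin n → ℂ) :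
    (starRingEnd ℂ) (q H v) = q H v := by
  have h0 : (starRingEnd ℂ) (star v ⬝ᵥ (H *ᵥ v)) = star (star v ⬝ᵥ (H *ᵥ v)) := rfl
  rw [q, h0, ← star_dotProduct, star_mulVec, hH.eq, ← dotProduct_mulVec]

lemma q_im {H : Matrix (Fin n) (Fin n) ℂ} (hH : H.IsHermitian) (v : Fin n → ℂ) :
    (q H v).im = 0 := by
  have := q_conj hH v
  have h2 := congrArg Complex.im this
  simp [Complex.conj_im] at h2
  linarith

lemma q_eq_re {H : Matrix (Fin n) (Fin n) ℂ} (hH : H.IsHermitian) (v : Fin n → ℂ) :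
    q H v = ((q H v).re : ℂ) := by
  rw [Complex.ext_iff]; simp [q_im hH]

lemma posSemidef_of_rayleigh {H : Matrix (Fin n) (Fin n) ℂ} (hH : H.IsHermitian)
    (h : ∀ v, 0 ≤ (q H v).re) : H.PosSemidef := by
  refine Matrix.PosSemidef.of_dotProduct_mulVec_nonneg hH fun x => ?_
  rw [Complex.nonneg_iff]
  exact ⟨h x, (q_im hH x).symm⟩

lemma q_bound (M : Matrix (Fin n) (Fin n) ℂ) :
    ∃ C : ℝ, 0 ≤ C ∧ ∀ v : Fin n → ℂ, |(q M v).re| ≤ C * ‖euc v‖^2 := by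
  obtain ⟨C, hC, hB⟩ := exists_opBound M
  refine ⟨C, hC, fun v => ?_⟩
  have h1 : ‖q M v‖ ≤ ‖euc v‖ * ‖euc (M *ᵥ v)‖ := by
    rw [q, ← euc_inner]
    exact norm_inner_le_norm (𝕜 := ℂ) _ _
  have h2 : |(q M v).re| ≤ ‖q M v‖ := Complex.abs_re_le_norm _
  have := hB v
  nlinarith [norm_nonneg (euc v), norm_nonneg (euc (M *ᵥ v))]

lemma rayleigh_lower {B : Matrix (Fin n) (Fin n) ℂ} (hB : B.PosDef) :
    ∃ ε : ℝ, 0 < ε ∧ ∀ v : Fin n → ℂ, ε * ‖euc v‖^2 ≤ (q B v).re := by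
  have hBps := hB.posSemidef
  set R := hBps.sqrt with hRdef
  have hRps : R.PosSemidef := hBps.posSemidef_sqrt
  have hRR : R * R = B := hBps.sqrt_mul_self
  have hRunit : IsUnit R.det := by
    have : R.det * R.det = B.det := by rw [← det_mul, hRR]
    have hBdet : IsUnit B.det := (Matrix.isUnit_iff_isUnit_det _).1 hB.isUnit
    rw [← this] at hBdet
    exact isUnit_of_mul_isUnit_left hBdet
  obtain ⟨C, hC, hB2⟩ := exists_opBound R⁻¹
  refine ⟨1 / (C + 1)^2, by positivity, fun v => ?_⟩
  have hq : q B v = ((‖euc (R *ᵥ v)‖ : ℂ)^2) := by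
    rw [q, ← hRR, ← mulVec_mulVec, dotProduct_mulVec, vecMul_herm hRps.1, euc_self]
  have hre : (q B v).re = ‖euc (R *ᵥ v)‖^2 := by rw [hq]; norm_cast
  have hv : ‖euc v‖ ≤ C * ‖euc (R *ᵥ v)‖ := by
    have : R⁻¹ *ᵥ (R *ᵥ v) = v := by
      rw [mulVec_mulVec, nonsing_inv_mul R hRunit, one_mulVec]
    simpa [this] using hB2 (R *ᵥ v)
  rw [hre]
  have h1 : 0 ≤ ‖euc (R *ᵥ v)‖ := norm_nonneg _
  have h2 : 0 ≤ ‖euc v‖ := norm_nonneg _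
  rw [div_mul_eq_mul_div, div_le_iff₀ (by positivity)]
  nlinarith

lemma herm_opBound {D : Matrix (Fin n) (Fin n) ℂ} (hD : D.IsHermitian) {c : ℝ} (hc : 0 ≤ c)
    (h : ∀ i, |hD.eigenvalues i| ≤ c) (v : Fin n → ℂ) :
    ‖euc (D *ᵥ v)‖ ≤ c * ‖euc v‖ := by
  set b := hD.eigenvectorBasis with hb
  set w : EuclideanSpace ℂ (Fin n) := euc v with hw
  have hT : euc (D *ᵥ v) = Matrix.toEuclideanLin D w := rfl
  have hsym : (Matrix.toEuclideanLin D).IsSymmetric := (isHermitian_iff_isSymmetric).1 hD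
  have hrepr : ∀ i, b.repr (Matrix.toEuclideanLin D w) i
      = (hD.eigenvalues i : ℂ) * b.repr w i := by
    intro i
    rw [b.repr_apply_apply, b.repr_apply_apply, ← hsym (b i) w]
    have hbi : Matrix.toEuclideanLin D (b i) = ((hD.eigenvalues i : ℂ)) • (b i) := by
      have hsm : ((hD.eigenvalues i : ℂ)) • (b i) = (hD.eigenvalues i : ℝ) • (b i) := by
        rw [show ((hD.eigenvalues i : ℂ)) = (hD.eigenvalues i : ℝ) • (1:ℂ) by
          simp [Complex.real_smul], smul_assoc, one_smul]
      rw [hsm]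
      apply (WithLp.equiv 2 (Fin n → ℂ)).injective
      simpa using hD.mulVec_eigenvectorBasis i
    rw [hbi, inner_smul_left]
    simp [Complex.conj_ofReal]
  have hnorm : ∀ x : EuclideanSpace ℂ (Fin n), ‖x‖ = ‖b.repr x‖ := fun x =>
    (b.repr.norm_map x).symm
  rw [hT, hnorm, hnorm w]
  rw [EuclideanSpace.norm_eq, EuclideanSpace.norm_eq]
  rw [← Real.sqrt_sq hc, ← Real.sqrt_mul (by positivity)]
  apply Real.sqrt_le_sqrt
  rw [Finset.mul_sum]
  apply Finset.sum_le_sum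
  intro i _
  rw [hrepr i]
  have := h i
  have h2 : ‖(hD.eigenvalues i : ℂ)‖ = |hD.eigenvalues i| := by
    simp [Complex.norm_real]
  rw [norm_mul, h2, mul_pow]
  have h4 : |hD.eigenvalues i|^2 ≤ c^2 := by
    have := abs_nonneg (hD.eigenvalues i)
    nlinarith
  nlinarith [sq_nonneg ‖b.repr w i‖]

lemma coord_le_norm (y : Fin n → ℂ) (i : Fin n) : ‖y i‖ ≤ ‖euc y‖ := by
  have h : ‖euc y‖ = Real.sqrt (∑ j, ‖y j‖^2) := by
    rw [EuclideanSpace.norm_eq]; rfl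
  rw [h]
  have h1 : ‖y i‖^2 ≤ ∑ j, ‖y j‖^2 :=
    Finset.single_le_sum (f := fun j => ‖y j‖^2) (fun j _ => sq_nonneg _) (Finset.mem_univ i)
  calc ‖y i‖ = Real.sqrt (‖y i‖^2) := (Real.sqrt_sq (norm_nonneg _)).symm
    _ ≤ _ := Real.sqrt_le_sqrt h1

lemma matrix_norm_le {D : Matrix (Fin n) (Fin n) ℂ} {c : ℝ} (hc : 0 ≤ c)
    (h : ∀ v : Fin n → ℂ, ‖euc (D *ᵥ v)‖ ≤ c * ‖euc v‖) : ‖D‖ ≤ c := by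
  rw [Matrix.norm_le_iff hc]
  intro i j
  have h1 : ‖(D *ᵥ Pi.single j 1) i‖ ≤ ‖euc (D *ᵥ Pi.single j 1)‖ := coord_le_norm _ i
  have h2 : ‖euc (Pi.single j (1:ℂ))‖ = 1 := by
    have : euc (Pi.single j (1:ℂ)) = EuclideanSpace.single j 1 := rfl
    rw [this, EuclideanSpace.norm_single]; simp
  have h3 := h (Pi.single j 1)
  rw [h2, mul_one] at h3
  have h4 : (D *ᵥ Pi.single j 1) i = D i j := by simp
  rw [h4] at h1
  exact h1.trans h3

lemma q_add (M N : Matrix (Fin n) (Fin n) ℂ) (v : Fin n → ℂ) :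
    q (M + N) v = q M v + q N v := by
  simp [q, add_mulVec, dotProduct_add]

lemma q_rsmul (t : ℝ) (M : Matrix (Fin n) (Fin n) ℂ) (v : Fin n → ℂ) :
    q (t • M) v = (t : ℂ) * q M v := by
  rw [q, smul_mulVec, dotProduct_smul, q]
  simp [Complex.real_smul]

end BWaux

open BWaux in
theorem stmt12 {n : ℕ} (A X Z : Matrix (Fin n) (Fin n) ℂ)
    (hA : A.PosDef) (hX : X.IsHermitian) (hZ : Z.IsHermitian)
    (hZeq : A * Z + Z * A = msqrt A * X * msqrt A) :
    (fun t : ℝ => msqrt (A ^ 2 + t • (msqrt A * X * msqrt A)) - (A + t • Z))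
        =O[nhds (0 : ℝ)] (fun t : ℝ => t ^ 2) ∧
    (fun t : ℝ => (sqAB A (A + t • X) + (sqAB A (A + t • X))ᴴ - (2 : ℝ) • A) - t • X)
        =O[nhds (0 : ℝ)] (fun t : ℝ => t ^ 2) ∧
    HasDerivAt
      (fun t : ℝ => sqAB A (A + t • X) + (sqAB A (A + t • X))ᴴ - (2 : ℝ) • A) X 0 := by
  classical
  have hAps : A.PosSemidef := hA.posSemidef
  have hmsA : msqrt A = hAps.sqrt := by rw [msqrt]; exact dif_pos hAps
  have hRps : (msqrt A).PosSemidef := by rw [hmsA]; exact hAps.posSemidef_sqrt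
  set R : Matrix (Fin n) (Fin n) ℂ := msqrt A with hRdef
  have hRH : R.IsHermitian := hRps.1
  have hRR : R * R = A := by rw [hmsA]; exact hAps.sqrt_mul_self
  have hRdet : IsUnit R.det := by
    have h : R.det * R.det = A.det := by rw [← det_mul, hRR]
    have hAdet : IsUnit A.det := (Matrix.isUnit_iff_isUnit_det _).1 hA.isUnit
    rw [← h] at hAdet
    exact isUnit_of_mul_isUnit_left hAdet
  have hRiR : R⁻¹ * R = 1 := nonsing_inv_mul R hRdet
  have hRRi : R * R⁻¹ = 1 := mul_nonsing_inv R hRdet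
  set M : Matrix (Fin n) (Fin n) ℂ := R * X * R with hMdef
  have hMH : M.IsHermitian := by
    rw [Matrix.IsHermitian, hMdef, conjTranspose_mul, conjTranspose_mul, hRH.eq, hX.eq,
      Matrix.mul_assoc]
  -- constants
  obtain ⟨CZ, hCZ0, hCZ⟩ := exists_opBound (n := n) Z
  obtain ⟨CXq, hCXq0, hCXq⟩ := q_bound (n := n) X
  obtain ⟨CZq, hCZq0, hCZq⟩ := q_bound (n := n) Z
  obtain ⟨ε, hε, hray⟩ := rayleigh_lower hA
  set δ : ℝ := ε / (2 * (CXq + CZq + 1)) with hδdef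
  have hδ : 0 < δ := by positivity
  set K : ℝ := 2 * (CZ^2 + 1) / ε with hKdef
  have hK0 : 0 ≤ K := by positivity
  -- algebraic facts
  have hRAR : R * A * R = A ^ 2 := by rw [← hRR, pow_two]; noncomm_ring
  have hRA : R * A = A * R := by rw [← hRR]; noncomm_ring
  have hRiA : R⁻¹ * A = R := by
    rw [← hRR, ← Matrix.mul_assoc, hRiR, Matrix.one_mul]
  have hARi : A * R⁻¹ = R := by
    rw [← hRR, Matrix.mul_assoc, hRRi, Matrix.mul_one]
  have hRARi : R * A * R⁻¹ = A := by rw [hRA, Matrix.mul_assoc, hRRi, Matrix.mul_one]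
  have hRiAR : R⁻¹ * A * R = A := by
    rw [hRiA, hRR]
  have hRiH : R⁻¹.IsHermitian := by
    rw [Matrix.IsHermitian, conjTranspose_nonsing_inv, hRH.eq]
  have hZX : R * Z * R⁻¹ + R⁻¹ * Z * R = X := by
    have h1 : R⁻¹ * (A * Z + Z * A) * R⁻¹ = R⁻¹ * (R * X * R) * R⁻¹ := by rw [hZeq]
    have h2 : R⁻¹ * (R * X * R) * R⁻¹ = X := by
      calc R⁻¹ * (R * X * R) * R⁻¹ = (R⁻¹ * R) * X * (R * R⁻¹) := by noncomm_ring
        _ = X := by rw [hRiR, hRRi, Matrix.one_mul, Matrix.mul_one]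
    have h3 : R⁻¹ * (A * Z + Z * A) * R⁻¹
        = R * Z * R⁻¹ + R⁻¹ * Z * R := by
      have e1 : R⁻¹ * (A * Z) = R * Z := by rw [← Matrix.mul_assoc, hRiA]
      have e2 : (Z * A) * R⁻¹ = Z * R := by rw [Matrix.mul_assoc, hARi]
      calc R⁻¹ * (A * Z + Z * A) * R⁻¹
          = (R⁻¹ * (A * Z)) * R⁻¹ + R⁻¹ * ((Z * A) * R⁻¹) := by noncomm_ring
        _ = R * Z * R⁻¹ + R⁻¹ * (Z * R) := by rw [e1, e2]
        _ = _ := by noncomm_ring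
    rw [h3, h2] at h1
    exact h1
  -- the key pointwise estimate
  have key : ∀ t : ℝ, |t| < δ →
      ∃ hPSD : (A ^ 2 + t • M).PosSemidef,
        msqrt (A ^ 2 + t • M) = hPSD.sqrt ∧
        ‖msqrt (A ^ 2 + t • M) - (A + t • Z)‖ ≤ K * t ^ 2 := by
    intro t ht
    have hδε : δ * (2 * (CXq + CZq + 1)) = ε := by
      rw [hδdef]; field_simp
    have htX : |t| * CXq ≤ ε / 2 := by nlinarith [abs_nonneg t]
    have htZ : |t| * CZq ≤ ε / 2 := by nlinarith [abs_nonneg t]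
    have htXH : (t • X).IsHermitian := by
      rw [Matrix.IsHermitian, conjTranspose_smul, star_trivial, hX.eq]
    have htZH : (t • Z).IsHermitian := by
      rw [Matrix.IsHermitian, conjTranspose_smul, star_trivial, hZ.eq]
    have hSH : (A + t • Z).IsHermitian := hA.1.add htZH
    have hAXH : (A + t • X).IsHermitian := hA.1.add htXH
    -- A + t X is PSD
    have hAX : (A + t • X).PosSemidef := by
      apply posSemidef_of_rayleigh hAXH
      intro v
      have h1 := hray v
      have h2 := hCXq v
      have hq : (q (A + t • X) v).re = (q A v).re + t * (q X v).re := by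
        rw [q_add, Complex.add_re, q_rsmul]
        simp [Complex.mul_re]
      rw [hq]
      have h3 : |t * (q X v).re| ≤ (ε/2) * ‖euc v‖^2 := by
        rw [abs_mul]
        calc |t| * |(q X v).re| ≤ |t| * (CXq * ‖euc v‖^2) := by
              exact mul_le_mul_of_nonneg_left h2 (abs_nonneg t)
          _ ≤ (ε/2) * ‖euc v‖^2 := by nlinarith [sq_nonneg ‖euc v‖, abs_nonneg t]
      have h4 := neg_abs_le (t * (q X v).re)
      nlinarith [sq_nonneg ‖euc v‖]
    -- A^2 + t M is PSD
    have hconj : R * (A + t • X) * R = A ^ 2 + t • M := by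
      rw [Matrix.mul_add, Matrix.add_mul, hRAR]
      congr 1
      rw [Matrix.mul_smul, Matrix.smul_mul]
    have hPSD : (A ^ 2 + t • M).PosSemidef := by
      have h := hAX.conjTranspose_mul_mul_same R
      rwa [hRH.eq, hconj] at h
    have hms : msqrt (A ^ 2 + t • M) = hPSD.sqrt := by rw [msqrt]; exact dif_pos hPSD
    refine ⟨hPSD, hms, ?_⟩
    set P : Matrix (Fin n) (Fin n) ℂ := hPSD.sqrt with hPdef
    have hPps : P.PosSemidef := hPSD.posSemidef_sqrt
    have hPH : P.IsHermitian := hPps.1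
    have hPP : P * P = A ^ 2 + t • M := hPSD.sqrt_mul_self
    set S : Matrix (Fin n) (Fin n) ℂ := A + t • Z with hSdef
    set D : Matrix (Fin n) (Fin n) ℂ := P - S with hDdef
    have hDH : D.IsHermitian := hPH.sub hSH
    have hSS : S * S = A ^ 2 + t • M + (t^2) • (Z * Z) := by
      have e : S * S = A * A + (t • (A * Z) + t • (Z * A)) + (t*t) • (Z * Z) := by
        rw [hSdef]
        simp only [Matrix.add_mul, Matrix.mul_add, Matrix.mul_smul, Matrix.smul_mul, smul_smul, smul_add]
        abel
      rw [e, ← smul_add, hZeq, show (t*t) = t^2 from (pow_two t).symm,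
        show A * A = A^2 from (pow_two A).symm]
    have hPexp : S * D + D * S + D * D = P * P - S * S := by
      rw [hDdef]
      simp only [Matrix.mul_sub, Matrix.sub_mul]
      abel
    have hkey2 : S * D + D * S + D * D = (-(t^2) : ℝ) • (Z * Z) := by
      rw [hPexp, hPP, hSS, neg_smul]
      abel
    -- eigenvalue bound for D
    have heig : ∀ i, |hDH.eigenvalues i| ≤ K * t ^ 2 := by
      intro i
      set μ : ℝ := hDH.eigenvalues i with hμdef
      set v : Fin n → ℂ := ⇑(hDH.eigenvectorBasis i) with hvdef
      have heucv : euc v = hDH.eigenvectorBasis i := rfl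
      have hnv : ‖euc v‖ = 1 := by rw [heucv]; exact hDH.eigenvectorBasis.orthonormal.1 i
      have hvv : star v ⬝ᵥ v = 1 := by rw [euc_self, hnv]; norm_num
      have hDv : D *ᵥ v = ((μ : ℂ)) • v := by
        have h1 := hDH.mulVec_eigenvectorBasis i
        funext j
        have h2 := congrFun h1 j
        simpa [Complex.real_smul] using h2
      set s : ℝ := (q S v).re with hsdef
      set c' : ℝ := ‖euc (Z *ᵥ v)‖^2 with hc'def
      have hqS : q S v = (s : ℂ) := q_eq_re hSH v
      have hqSD : q (S * D) v = (μ : ℂ) * q S v := by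
        rw [q, ← mulVec_mulVec, hDv, mulVec_smul, dotProduct_smul, smul_eq_mul, ← q]
      have hqDS : q (D * S) v = (μ : ℂ) * q S v := by
        rw [q, ← mulVec_mulVec, dotProduct_mulVec, vecMul_herm hDH, hDv, star_smul,
          smul_dotProduct]
        simp [q, Complex.star_def, Complex.conj_ofReal]
      have hqDD : q (D * D) v = ((μ : ℂ))^2 := by
        rw [q, ← mulVec_mulVec, hDv, mulVec_smul, hDv, smul_smul, dotProduct_smul,
          smul_eq_mul, hvv]
        ring
      have hqZZ : q (Z * Z) v = ((c' : ℝ) : ℂ) := by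
        rw [q, ← mulVec_mulVec, dotProduct_mulVec, vecMul_herm hZ, euc_self, hc'def]
        norm_cast
      have hmain : (μ:ℂ) * (s:ℂ) + (μ:ℂ) * (s:ℂ) + ((μ:ℂ))^2
          = (((-(t^2)) : ℝ) : ℂ) * ((c' : ℝ) : ℂ) := by
        calc (μ:ℂ) * (s:ℂ) + (μ:ℂ) * (s:ℂ) + ((μ:ℂ))^2
            = q (S * D) v + q (D * S) v + q (D * D) v := by rw [hqSD, hqDS, hqDD, hqS]
          _ = q (S * D + D * S + D * D) v := by rw [q_add, q_add]
          _ = q ((-(t^2) : ℝ) • (Z * Z)) v := by rw [hkey2]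
          _ = _ := by rw [q_rsmul, hqZZ]
      have heqr : 2*(μ*s) + μ^2 = -(t^2 * c') := by
        have h2 : ((2*(μ*s) + μ^2 : ℝ) : ℂ) = ((-(t^2 * c') : ℝ) : ℂ) := by
          push_cast at hmain ⊢
          linear_combination hmain
        exact_mod_cast h2
      have hs : ε/2 ≤ s := by
        have h1 := hray v
        have h2 := hCZq v
        rw [hnv] at h1 h2
        have hqs : s = (q A v).re + t * (q Z v).re := by
          rw [hsdef, hSdef, q_add, Complex.add_re, q_rsmul]
          simp [Complex.mul_re]
        have h3 : |t * (q Z v).re| ≤ ε/2 := by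
          rw [abs_mul]
          calc |t| * |(q Z v).re| ≤ |t| * CZq := by
                exact mul_le_mul_of_nonneg_left (by simpa using h2) (abs_nonneg t)
            _ ≤ ε/2 := htZ
        have h4 := neg_abs_le (t * (q Z v).re)
        simp only [one_pow, mul_one] at h1
        nlinarith
      have hqP : 0 ≤ (q P v).re := (Complex.nonneg_iff.1 (hPps.dotProduct_mulVec_nonneg v)).1
      have hqD : (q D v).re = μ := by
        rw [q, hDv, dotProduct_smul, smul_eq_mul, hvv, mul_one]
        simp
      have hsμ : 0 ≤ s + μ := by
        have hPSd : q P v = q S v + q D v := by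
          have hPSD2 : P = S + D := by rw [hDdef]; abel
          rw [hPSD2, q_add]
        have h5 := hqP
        rw [hPSd, Complex.add_re, ← hsdef, hqD] at h5
        exact h5
      have hc'0 : 0 ≤ c' := sq_nonneg _
      have hc'Z : c' ≤ CZ^2 := by
        have := hCZ v
        rw [hnv, mul_one] at this
        rw [hc'def]
        nlinarith [norm_nonneg (euc (Z *ᵥ v))]
      have hμ0 : μ ≤ 0 := by
        by_contra hpos
        push_neg at hpos
        have hspos : 0 < s := lt_of_lt_of_le (by linarith) hs
        nlinarith [mul_pos hpos hspos, sq_nonneg t, mul_nonneg (sq_nonneg t) hc'0]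
      rw [abs_of_nonpos hμ0]
      have hKε : K * ε = 2 * (CZ^2 + 1) := by
        rw [hKdef]; field_simp
      nlinarith [mul_nonneg (neg_nonneg.2 hμ0) (by linarith : (0:ℝ) ≤ 2*s + μ - ε/2),
        mul_nonneg (sq_nonneg t) (by linarith : (0:ℝ) ≤ CZ^2 - c'),
        mul_nonneg (sq_nonneg t) hc'0, hε.le,
        mul_le_mul_of_nonneg_left hs (neg_nonneg.2 hμ0), sq_nonneg t]
    have hKt : (0:ℝ) ≤ K * t^2 := by positivity
    have hop := fun w => herm_opBound hDH hKt heig w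
    have hDnorm : ‖D‖ ≤ K * t^2 := matrix_norm_le hKt hop
    rw [hms]
    exact hDnorm
  -- part 1
  have part1 : (fun t : ℝ => msqrt (A ^ 2 + t • M) - (A + t • Z))
      =O[nhds (0 : ℝ)] (fun t : ℝ => t ^ 2) := by
    rw [isBigO_iff]
    refine ⟨K, ?_⟩
    filter_upwards [Metric.ball_mem_nhds (0:ℝ) hδ] with t ht
    rw [Metric.mem_ball, Real.dist_eq, sub_zero] at ht
    obtain ⟨hPSD, _, hb⟩ := key t ht
    calc ‖msqrt (A ^ 2 + t • M) - (A + t • Z)‖ ≤ K * t ^ 2 := hb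
      _ = K * ‖t ^ 2‖ := by rw [Real.norm_eq_abs, abs_of_nonneg (sq_nonneg t)]
  -- part 2
  have part2 : (fun t : ℝ => (sqAB A (A + t • X) + (sqAB A (A + t • X))ᴴ - (2 : ℝ) • A) - t • X)
      =O[nhds (0 : ℝ)] (fun t : ℝ => t ^ 2) := by
    obtain ⟨L, hLdef⟩ : ∃ L : Matrix (Fin n) (Fin n) ℂ →L[ℂ] Matrix (Fin n) (Fin n) ℂ,
        ∀ W, L W = R * W * R⁻¹ + R⁻¹ * W * R :=
      ⟨LinearMap.toContinuousLinearMap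
        { toFun := fun W => R * W * R⁻¹ + R⁻¹ * W * R
          map_add' := by intros; noncomm_ring
          map_smul' := by
            intros c W
            simp only [RingHom.id_apply, smul_add, Matrix.mul_smul, Matrix.smul_mul] },
        fun W => rfl⟩
    have hO1 : (fun t : ℝ => L (msqrt (A ^ 2 + t • M) - (A + t • Z))) =O[nhds 0]
        (fun t : ℝ => msqrt (A ^ 2 + t • M) - (A + t • Z)) := L.isBigO_comp _ _
    have hO2 := hO1.trans part1
    refine hO2.congr' ?_ EventuallyEq.rfl
    filter_upwards [Metric.ball_mem_nhds (0:ℝ) hδ] with t ht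
    rw [Metric.mem_ball, Real.dist_eq, sub_zero] at ht
    obtain ⟨hPSD, hms, _⟩ := key t ht
    have hconj : R * (A + t • X) * R = A ^ 2 + t • M := by
      rw [Matrix.mul_add, Matrix.add_mul, hRAR]
      congr 1
      rw [Matrix.mul_smul, Matrix.smul_mul]
    have hsq : sqAB A (A + t • X) = R * hPSD.sqrt * R⁻¹ := by
      rw [sqAB, ← hRdef, hconj, hms]
    have hPH : (hPSD.sqrt).IsHermitian := hPSD.posSemidef_sqrt.1
    have hadj : (R * hPSD.sqrt * R⁻¹)ᴴ = R⁻¹ * hPSD.sqrt * R := by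
      rw [conjTranspose_mul, conjTranspose_mul, hRiH.eq, hPH.eq, hRH.eq, Matrix.mul_assoc]
    have hRSR : R * (A + t • Z) * R⁻¹ + R⁻¹ * (A + t • Z) * R = (2:ℝ) • A + t • X := by
      have e1 : R * (A + t • Z) * R⁻¹ = A + t • (R * Z * R⁻¹) := by
        rw [Matrix.mul_add, Matrix.add_mul, hRARi, Matrix.mul_smul, Matrix.smul_mul]
      have e2 : R⁻¹ * (A + t • Z) * R = A + t • (R⁻¹ * Z * R) := by
        rw [Matrix.mul_add, Matrix.add_mul, hRiAR, Matrix.mul_smul, Matrix.smul_mul]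
      rw [e1, e2, ← hZX, smul_add, two_smul]
      abel
    rw [hms, hLdef, hsq, hadj]
    have expand : R * (hPSD.sqrt - (A + t • Z)) * R⁻¹
        = R * hPSD.sqrt * R⁻¹ - R * (A + t • Z) * R⁻¹ := by
      rw [Matrix.mul_sub, Matrix.sub_mul]
    have expand2 : R⁻¹ * (hPSD.sqrt - (A + t • Z)) * R
        = R⁻¹ * hPSD.sqrt * R - R⁻¹ * (A + t • Z) * R := by
      rw [Matrix.mul_sub, Matrix.sub_mul]
    rw [expand, expand2]
    calc R * hPSD.sqrt * R⁻¹ - R * (A + t • Z) * R⁻¹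
          + (R⁻¹ * hPSD.sqrt * R - R⁻¹ * (A + t • Z) * R)
        = (R * hPSD.sqrt * R⁻¹ + R⁻¹ * hPSD.sqrt * R)
          - (R * (A + t • Z) * R⁻¹ + R⁻¹ * (A + t • Z) * R) := by abel
      _ = (R * hPSD.sqrt * R⁻¹ + R⁻¹ * hPSD.sqrt * R) - ((2:ℝ) • A + t • X) := by rw [hRSR]
      _ = R * hPSD.sqrt * R⁻¹ + R⁻¹ * hPSD.sqrt * R - (2:ℝ) • A - t • X := by abel
  refine ⟨part1, part2, ?_⟩
  -- part 3
  have hg0 : sqAB A (A + (0:ℝ) • X) + (sqAB A (A + (0:ℝ) • X))ᴴ - (2:ℝ) • A = 0 := by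
    have hA2 : (A^2).PosSemidef := hAps.pow 2
    have hmsA2 : msqrt (A^2) = A := by
      have h1 : msqrt (A^2) = hA2.sqrt := by rw [msqrt]; exact dif_pos hA2
      rw [h1]
      exact hAps.sqrt_sq hA2
    have h00 : A + (0:ℝ) • X = A := by simp
    rw [h00]
    have hsqA : sqAB A A = A := by
      rw [sqAB, ← hRdef, hRAR, hmsA2, hRARi]
    rw [hsqA, hA.1.eq, two_smul]
    abel
  have hlo : (fun t : ℝ => t^2) =o[nhds (0:ℝ)] (fun t : ℝ => t) := by
    have h1 : (fun t : ℝ => t) =o[nhds (0:ℝ)] (fun _ : ℝ => (1:ℝ)) := by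
      rw [isLittleO_one_iff]
      exact Filter.tendsto_id
    have h2 := (isBigO_refl (fun t : ℝ => t) (nhds 0)).mul_isLittleO h1
    simpa [pow_two] using h2
  have hfin := part2.trans_isLittleO hlo
  refine hasDerivAt_iff_isLittleO.2 ?_
  have goal_eq : ∀ t : ℝ, (sqAB A (A + t • X) + (sqAB A (A + t • X))ᴴ - (2:ℝ) • A)
      - (sqAB A (A + (0:ℝ) • X) + (sqAB A (A + (0:ℝ) • X))ᴴ - (2:ℝ) • A) - (t - 0) • X
      = (sqAB A (A + t • X) + (sqAB A (A + t • X))ᴴ - (2:ℝ) • A) - t • X := by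
    intro t
    rw [hg0]
    simp
  refine hfin.congr' (Filter.Eventually.of_forall fun t => (goal_eq t).symm) ?_
  exact Filter.Eventually.of_forall fun t => (sub_zero t).symm
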